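/- arXiv:1101.0683 — 2 statements merged into one kernel-verified Lean document; each statement's English description precedes it below -/
import Mathlib

section
/- Let L/k be a finite Galois extension with group G. Every finite-dimensional L-vector space V endowed with a semilinear G-action is G-equivariantly isomorphic to L ⊗_k (V^G); in particular V admits an L-basis of G-invariant vectors. -/
open TensorProduct

section Aux

variable (k L V : Type) [Field k] [Field L] [Algebra k L]
    [FiniteDimensional k L] [IsGalois k L]
    [AddCommGroup V] [Module k V] [Module L V] [IsScalarTower k L V]
    [FiniteDimensional L V]

/-- Elements of `L` fixed by all of `Gal(L/k)` come from `k`. -/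
lemma gd_fixed_mem_range (x : L) (hx : ∀ g : L ≃ₐ[k] L, g x = x) :
    ∃ y : k, algebraMap k L y = x := by
  have h1 : x ∈ IntermediateField.fixedField (⊤ : Subgroup (L ≃ₐ[k] L)) := by
    intro g
    exact hx g
  rw [← IntermediateField.fixingSubgroup_bot (F := k) (E := L),
    IsGalois.fixedField_fixingSubgroup (⊥ : IntermediateField k L)] at h1
  obtain ⟨y, hy⟩ := IntermediateField.mem_bot.mp h1
  exact ⟨y, hy⟩

end Aux

/-- Galois descent for vector spaces: for a finite Galois extension L/k with
group G, every finite-dimensional L-vector space V with a semilinear G-action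
is G-equivariantly isomorphic to L ⊗_k V^G; in particular V admits an L-basis
of G-invariant vectors. -/
theorem galois_descent_vector_spaces
    (k L V : Type) [Field k] [Field L] [Algebra k L]
    [FiniteDimensional k L] [IsGalois k L]
    [AddCommGroup V] [Module k V] [Module L V] [IsScalarTower k L V]
    [FiniteDimensional L V]
    (ρ : (L ≃ₐ[k] L) →* Multiplicative (AddAut V))
    (hsemi : ∀ (g : L ≃ₐ[k] L) (lam : L) (v : V), (ρ g).toAdd (lam • v) = g lam • (ρ g).toAdd v)
    (VG : Submodule k V)
    (hVG : ∀ v : V, v ∈ VG ↔ ∀ g : L ≃ₐ[k] L, (ρ g).toAdd v = v) :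
    (∃ e : (L ⊗[k] VG) ≃ₗ[L] V,
        ∀ (g : L ≃ₐ[k] L) (l : L) (w : VG),
          e (g l ⊗ₜ[k] w) = (ρ g).toAdd (e (l ⊗ₜ[k] w))) ∧
    (∃ b : Module.Basis (Fin (Module.finrank L V)) L V,
        ∀ (i : Fin (Module.finrank L V)) (g : L ≃ₐ[k] L), (ρ g).toAdd (b i) = b i) := by
  classical
  let ρ' : (L ≃ₐ[k] L) →* AddMonoid.End V :=
    { toFun := fun g => ((ρ g).toAdd : V ≃+ V).toAddMonoidHom
      map_one' := by
        ext v
        show (ρ 1).toAdd v = v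
        rw [map_one]
        rfl
      map_mul' := fun g h => by
        ext v
        show (ρ (g * h)).toAdd v = (ρ g).toAdd ((ρ h).toAdd v)
        rw [map_mul]
        rfl }
  have hsemi' : ∀ (g : L ≃ₐ[k] L) (lam : L) (v : V), ρ' g (lam • v) = g lam • ρ' g v := hsemi
  have hVG' : ∀ v : V, v ∈ VG ↔ ∀ g : L ≃ₐ[k] L, ρ' g v = v := hVG
  show (∃ e : (L ⊗[k] VG) ≃ₗ[L] V,
        ∀ (g : L ≃ₐ[k] L) (l : L) (w : VG),
          e (g l ⊗ₜ[k] w) = ρ' g (e (l ⊗ₜ[k] w))) ∧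
    (∃ b : Module.Basis (Fin (Module.finrank L V)) L V,
        ∀ (i : Fin (Module.finrank L V)) (g : L ≃ₐ[k] L), ρ' g (b i) = b i)
  clear_value ρ'
  clear hsemi hVG ρ
  rename' ρ' => ρ, hsemi' => hsemi, hVG' => hVG
  have hVtrans : FiniteDimensional k V := Module.Finite.trans L V
  set m := Module.finrank k VG with hm
  let b : Module.Basis (Fin m) k VG := Module.finBasis k VG
  set w : Fin m → V := fun i => (b i : V) with hw
  have hwVG : ∀ i, w i ∈ VG := fun i => (b i).2
  have hwfix : ∀ (g : L ≃ₐ[k] L) (i : Fin m), ρ g (w i) = w i :=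
    fun g i => (hVG _).1 (hwVG i) g
  -- k-linear independence of w in V
  have hwk : LinearIndependent k w := by
    have := b.linearIndependent
    have h2 : LinearIndependent k (VG.subtype ∘ b) :=
      this.map' VG.subtype (Submodule.ker_subtype VG)
    exact h2
  have hwk' : ∀ (s : Finset (Fin m)) (c : Fin m → k),
      ∑ i ∈ s, c i • w i = 0 → ∀ i ∈ s, c i = 0 :=
    fun s c h i hi => linearIndependent_iff'.mp hwk s c h i hi
  -- key lemma: L-linear relations among the w i vanish
  have key : ∀ (s : Finset (Fin m)) (c : Fin m → L),
      ∑ i ∈ s, c i • w i = 0 → ∀ i ∈ s, c i = 0 := by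
    intro s
    induction s using Finset.strongInductionOn with
    | _ s ih =>
      intro c hc
      by_contra hne
      push_neg at hne
      obtain ⟨i₀, hi₀s, hi₀⟩ := hne
      set d : Fin m → L := fun i => (c i₀)⁻¹ * c i with hd
      have hd0 : ∑ i ∈ s, d i • w i = 0 := by
        have h := congrArg (fun x => (c i₀)⁻¹ • x) hc
        simpa [Finset.smul_sum, smul_smul, hd] using h
      have hdi₀ : d i₀ = 1 := inv_mul_cancel₀ hi₀
      have hg : ∀ (g : L ≃ₐ[k] L), ∀ i ∈ s, g (d i) = d i := by
        intro g
        have h1 : ∑ i ∈ s, g (d i) • w i = 0 := by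
          have h2 := congrArg (ρ g) hd0
          rw [map_sum] at h2
          simp only [hsemi] at h2
          simp only [hwfix] at h2
          simpa using h2
        have h4 : ∑ i ∈ s, (g (d i) - d i) • w i = 0 := by
          simp only [sub_smul, Finset.sum_sub_distrib, h1, hd0, sub_zero]
        have h3 : ∑ i ∈ s.erase i₀, (g (d i) - d i) • w i = 0 := by
          rw [Finset.sum_erase s (by rw [hdi₀, map_one, sub_self, zero_smul])]
          exact h4
        have h5 := ih (s.erase i₀) (Finset.erase_ssubset hi₀s) _ h3
        intro i his
        by_cases h : i = i₀
        · subst h; rw [hdi₀, map_one]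
        · exact sub_eq_zero.mp (h5 i (Finset.mem_erase.mpr ⟨h, his⟩))
      have hek : ∀ i ∈ s, ∃ y : k, algebraMap k L y = d i :=
        fun i hi => gd_fixed_mem_range k L (d i) (fun g => hg g i hi)
      set E : Fin m → k := fun i => if h : i ∈ s then (hek i h).choose else 0 with hE
      have hEd : ∀ i ∈ s, algebraMap k L (E i) = d i := by
        intro i hi
        simp only [hE, dif_pos hi]
        exact (hek i hi).choose_spec
      have hE0 : ∑ i ∈ s, E i • w i = 0 := by
        rw [← hd0]
        refine Finset.sum_congr rfl fun i hi => ?_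
        rw [← hEd i hi, algebraMap_smul]
      have := hwk' s E hE0 i₀ hi₀s
      have : d i₀ = 0 := by rw [← hEd i₀ hi₀s, this, map_zero]
      rw [hdi₀] at this
      exact one_ne_zero this
  -- L-linear independence of w
  have hwL : LinearIndependent L w := by
    rw [linearIndependent_iff']
    exact key
  -- spanning: L-span of VG is everything
  have hspan : Submodule.span L (VG : Set V) = ⊤ := by
    by_contra hne
    obtain ⟨f, hf0, hf⟩ := Submodule.exists_dual_map_eq_bot_of_lt_top
      (lt_top_iff_ne_top.mpr hne) inferInstance
    have hfv : ∀ v ∈ VG, f v = 0 := by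
      intro v hv
      have : f v ∈ Submodule.map f (Submodule.span L (VG : Set V)) :=
        ⟨v, Submodule.subset_span hv, rfl⟩
      rw [hf] at this
      exact this
    have havg : ∀ (v : V) (lam : L), (∑ g : L ≃ₐ[k] L, g lam • ρ g v) ∈ VG := by
      intro v lam
      rw [hVG]
      intro h
      calc ρ h (∑ g : L ≃ₐ[k] L, g lam • ρ g v)
          = ∑ g : L ≃ₐ[k] L, ρ h (g lam • ρ g v) := map_sum _ _ _
        _ = ∑ g : L ≃ₐ[k] L, ((h * g) lam) • ρ (h * g) v := by
            refine Finset.sum_congr rfl fun g _ => ?_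
            rw [hsemi]
            rw [map_mul ρ]
            rfl
        _ = ∑ g : L ≃ₐ[k] L, g lam • ρ g v :=
            Fintype.sum_equiv (Equiv.mulLeft h) _ _ (fun g => rfl)
    have hchar : ∀ (v : V) (lam : L),
        ∑ g : L ≃ₐ[k] L, f (ρ g v) * g lam = 0 := by
      intro v lam
      have h1 := hfv _ (havg v lam)
      rw [map_sum] at h1
      simp only [LinearMap.map_smul, smul_eq_mul] at h1
      rw [← h1]
      exact Finset.sum_congr rfl fun g _ => mul_comm _ _
    have hli : LinearIndependent L
        (fun g : L ≃ₐ[k] L => ((MonoidHomClass.toMonoidHom g : L →* L) : L → L)) := by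
      refine (linearIndependent_monoidHom L L).comp
        (fun g : L ≃ₐ[k] L => (MonoidHomClass.toMonoidHom g : L →* L)) ?_
      intro g g' hgg'
      ext x
      exact DFunLike.congr_fun hgg' x
    have hzero : ∀ (v : V) (g : L ≃ₐ[k] L), f (ρ g v) = 0 := by
      intro v
      refine Fintype.linearIndependent_iff.mp hli (fun g => f (ρ g v)) ?_
      funext lam
      rw [Finset.sum_apply]
      simp only [Pi.smul_apply, smul_eq_mul]
      exact hchar v lam
    refine hf0 (LinearMap.ext fun v => ?_)
    have := hzero v 1
    rw [map_one ρ] at this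
    simpa using this
  -- the base change map
  set φ : L ⊗[k] VG →ₗ[L] V := (VG.subtype).liftBaseChange L with hφ
  have hφtmul : ∀ (l : L) (x : VG), φ (l ⊗ₜ[k] x) = l • (x : V) := by
    intro l x
    simp [hφ]
  have hsurj : Function.Surjective φ := by
    rw [← LinearMap.range_eq_top, ← top_le_iff, ← hspan, Submodule.span_le]
    rintro v hv
    exact ⟨(1 : L) ⊗ₜ[k] (⟨v, hv⟩ : VG), by simp [hφtmul]⟩
  set B : Module.Basis (Fin m) L (L ⊗[k] VG) := Algebra.TensorProduct.basis L b with hB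
  have hφB : ∀ i, φ (B i) = w i := by
    intro i
    rw [hB, Algebra.TensorProduct.basis_apply, hφtmul, one_smul]
  have hinj : Function.Injective φ := by
    have hker : ∀ x, φ x = 0 → x = 0 := by
      intro x hx
      have hrep := B.sum_repr x
      have h1 : ∑ i, B.repr x i • w i = 0 := by
        calc ∑ i, B.repr x i • w i
            = ∑ i, B.repr x i • φ (B i) := by simp only [hφB]
          _ = φ (∑ i, B.repr x i • B i) := by rw [map_sum]; simp only [map_smul]
          _ = φ x := by rw [hrep]
          _ = 0 := hx
      have h2 := key Finset.univ (fun i => B.repr x i) h1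
      rw [← hrep]
      refine Finset.sum_eq_zero fun i _ => ?_
      have h3 := h2 i (Finset.mem_univ i)
      rw [h3, zero_smul]
    intro a b hab
    have := hker (a - b) (by rw [map_sub, hab, sub_self])
    exact sub_eq_zero.mp this
  set e : (L ⊗[k] VG) ≃ₗ[L] V := LinearEquiv.ofBijective φ ⟨hinj, hsurj⟩ with he
  have heapp : ∀ (l : L) (x : VG), e (l ⊗ₜ[k] x) = l • (x : V) := by
    intro l x
    rw [he]
    exact hφtmul l x
  constructor
  · refine ⟨e, fun g l x => ?_⟩
    rw [heapp, heapp, hsemi, (hVG _).1 x.2 g]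
  · -- the basis of invariant vectors
    have hmn : m = Module.finrank L V := by
      have h1 : Module.finrank L (L ⊗[k] VG) = Module.finrank L V :=
        e.finrank_eq
    -- finrank of tensor equals m via basis B
      have h2 : Module.finrank L (L ⊗[k] VG) = m := by
        rw [Module.finrank_eq_card_basis B, Fintype.card_fin]
      rw [← h1, h2]
    set v : Fin (Module.finrank L V) → V := fun i => w (Fin.cast hmn.symm i) with hv
    have hvL : LinearIndependent L v := by
      refine hwL.comp _ ?_
      intro i j hij
      exact Fin.cast_injective _ hij
    have hvspan : ⊤ ≤ Submodule.span L (Set.range v) := by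
      rw [← hspan, Submodule.span_le]
      intro x hx
      have hxsum : (x : V) = ∑ i, b.repr ⟨x, hx⟩ i • w i := by
        have := b.sum_repr ⟨x, hx⟩
        calc (x : V) = ((∑ i, b.repr ⟨x, hx⟩ i • b i : VG) : V) := by rw [this]
          _ = ∑ i, b.repr ⟨x, hx⟩ i • w i := by
              push_cast
              rfl
      rw [hxsum]
      refine Submodule.sum_mem _ fun i _ => ?_
      rw [← algebraMap_smul L (b.repr ⟨x, hx⟩ i) (w i)]
      refine Submodule.smul_mem _ _ (Submodule.subset_span ?_)
      exact ⟨Fin.cast hmn i, by simp [hv]⟩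
    refine ⟨Module.Basis.mk hvL hvspan, fun i g => ?_⟩
    rw [Module.Basis.mk_apply]
    exact (hVG _).1 (hwVG _) g
end

section
/- There exist no rational functions U, V ∈ C(S,T) satisfying S·U² + T·V² = 1. -/
open Polynomial

lemma base_case (a c : Polynomial ℂ) (h : Polynomial.X * a ^ 2 = c ^ 2) : a = 0 ∧ c = 0 := by
  by_cases ha : a = 0
  · subst ha
    rw [zero_pow (by norm_num), mul_zero] at h
    exact ⟨rfl, pow_eq_zero_iff (n := 2) (by norm_num) |>.mp h.symm⟩
  · exfalso
    have hc : c ≠ 0 := by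
      intro hc
      rw [hc, zero_pow (by norm_num : (2:ℕ) ≠ 0), mul_eq_zero] at h
      rcases h with h | h
      · exact Polynomial.X_ne_zero h
      · exact ha (pow_eq_zero_iff (n := 2) (by norm_num) |>.mp h)
    have := congrArg Polynomial.natDegree h
    rw [Polynomial.natDegree_mul Polynomial.X_ne_zero (pow_ne_zero 2 ha),
      Polynomial.natDegree_pow, Polynomial.natDegree_pow, Polynomial.natDegree_X] at this
    omega

lemma step_case (a b c : Polynomial (Polynomial ℂ))
    (h : Polynomial.C Polynomial.X * a ^ 2 + Polynomial.X * b ^ 2 = c ^ 2) :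
    ∃ a' b' c', a = Polynomial.X * a' ∧ c = Polynomial.X * c' ∧
      Polynomial.C Polynomial.X * a' ^ 2 + Polynomial.X * b' ^ 2 = c' ^ 2 := by
  have h0 : Polynomial.X * (a.eval 0) ^ 2 = (c.eval 0) ^ 2 := by
    have := congrArg (Polynomial.eval 0) h
    simpa using this
  obtain ⟨ha0, hc0⟩ := base_case _ _ h0
  obtain ⟨a', rfl⟩ : (Polynomial.X : Polynomial (Polynomial ℂ)) ∣ a :=
    Polynomial.X_dvd_iff.mpr (by rwa [Polynomial.coeff_zero_eq_eval_zero])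
  obtain ⟨c', rfl⟩ : (Polynomial.X : Polynomial (Polynomial ℂ)) ∣ c :=
    Polynomial.X_dvd_iff.mpr (by rwa [Polynomial.coeff_zero_eq_eval_zero])
  have h2 : Polynomial.C Polynomial.X * Polynomial.X * a' ^ 2 + b ^ 2 = Polynomial.X * c' ^ 2 := by
    have h1 : Polynomial.X * (Polynomial.C Polynomial.X * Polynomial.X * a' ^ 2 + b ^ 2)
        = Polynomial.X * (Polynomial.X * c' ^ 2) := by ring_nf; linear_combination h
    exact mul_left_cancel₀ Polynomial.X_ne_zero h1
  have hb0 : b.eval 0 = 0 := by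
    have := congrArg (Polynomial.eval 0) h2
    simp only [Polynomial.eval_add, Polynomial.eval_mul, Polynomial.eval_pow, Polynomial.eval_C,
      Polynomial.eval_X, zero_mul, mul_zero, zero_add, add_zero] at this
    exact pow_eq_zero_iff (n := 2) (by norm_num) |>.mp this
  obtain ⟨b', rfl⟩ : (Polynomial.X : Polynomial (Polynomial ℂ)) ∣ b :=
    Polynomial.X_dvd_iff.mpr (by rwa [Polynomial.coeff_zero_eq_eval_zero])
  refine ⟨a', b', c', rfl, rfl, mul_left_cancel₀ Polynomial.X_ne_zero ?_⟩
  linear_combination h2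

lemma descent : ∀ (n : ℕ) (c a b : Polynomial (Polynomial ℂ)), c.natDegree ≤ n →
    Polynomial.C Polynomial.X * a ^ 2 + Polynomial.X * b ^ 2 = c ^ 2 → c = 0 := by
  intro n
  induction n with
  | zero =>
    intro c a b hdeg h
    obtain ⟨a', b', c', ha, hc, h'⟩ := step_case a b c h
    rcases eq_or_ne c' 0 with h0 | h0
    · rw [hc, h0, mul_zero]
    · exfalso
      rw [hc, Polynomial.natDegree_mul Polynomial.X_ne_zero h0, Polynomial.natDegree_X] at hdeg
      omega
  | succ n ih =>
    intro c a b hdeg h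
    obtain ⟨a', b', c', ha, hc, h'⟩ := step_case a b c h
    rcases eq_or_ne c' 0 with h0 | h0
    · rw [hc, h0, mul_zero]
    · refine absurd (ih c' a' b' ?_ h') h0
      rw [hc, Polynomial.natDegree_mul Polynomial.X_ne_zero h0, Polynomial.natDegree_X] at hdeg
      omega



noncomputable def myEquiv : MvPolynomial (Fin 2) ℂ ≃ₐ[ℂ] Polynomial (Polynomial ℂ) :=
  (MvPolynomial.finSuccEquiv ℂ 1).trans <| Polynomial.mapAlgEquiv <|
    (MvPolynomial.finSuccEquiv ℂ 0).trans <|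
      Polynomial.mapAlgEquiv (MvPolynomial.isEmptyAlgEquiv ℂ (Fin 0))

lemma myEquiv_X0 : myEquiv (MvPolynomial.X 0) = Polynomial.X := by
  simp [myEquiv, MvPolynomial.finSuccEquiv_X_zero]

lemma myEquiv_X1 : myEquiv (MvPolynomial.X 1) = Polynomial.C Polynomial.X := by
  have : (MvPolynomial.X 1 : MvPolynomial (Fin 2) ℂ) = MvPolynomial.X (Fin.succ 0) := rfl
  simp [myEquiv, this, MvPolynomial.finSuccEquiv_X_succ, MvPolynomial.finSuccEquiv_X_zero]

set_option synthInstance.maxHeartbeats 1000000 in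
/-- There are no rational functions U, V ∈ ℂ(S,T) with S·U² + T·V² = 1. -/
theorem no_solution_in_rational_functions :
    ¬ ∃ U V : FractionRing (MvPolynomial (Fin 2) ℂ),
      (algebraMap (MvPolynomial (Fin 2) ℂ) (FractionRing (MvPolynomial (Fin 2) ℂ))
          (MvPolynomial.X 0)) * U ^ 2 +
      (algebraMap (MvPolynomial (Fin 2) ℂ) (FractionRing (MvPolynomial (Fin 2) ℂ))
          (MvPolynomial.X 1)) * V ^ 2 = 1 := by
  rintro ⟨U, V, h⟩
  let R := MvPolynomial (Fin 2) ℂ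
  let K := FractionRing R
  let f : R →+* K := algebraMap R K
  obtain ⟨⟨a₁, a₂⟩, hU⟩ := IsLocalization.mk'_surjective (nonZeroDivisors R) U
  obtain ⟨⟨b₁, b₂⟩, hV⟩ := IsLocalization.mk'_surjective (nonZeroDivisors R) V
  have hU' : U * f (a₂ : R) = f a₁ := by rw [← hU]; exact IsLocalization.mk'_spec _ _ _
  have hV' : V * f (b₂ : R) = f b₁ := by rw [← hV]; exact IsLocalization.mk'_spec _ _ _
  have key : f (MvPolynomial.X 0 * (a₁ * (b₂ : R)) ^ 2 + MvPolynomial.X 1 * (b₁ * (a₂ : R)) ^ 2)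
      = f (((a₂ : R) * (b₂ : R)) ^ 2) := by
    simp only [map_add, map_mul, map_pow]
    linear_combination (f (a₂ : R) * f (b₂ : R)) ^ 2 * h
      - f (MvPolynomial.X 0) * (f (b₂ : R)) ^ 2 * (U * f (a₂ : R) + f a₁) * hU'
      - f (MvPolynomial.X 1) * (f (a₂ : R)) ^ 2 * (V * f (b₂ : R) + f b₁) * hV'
  have hkey : MvPolynomial.X 0 * (a₁ * (b₂ : R)) ^ 2 + MvPolynomial.X 1 * (b₁ * (a₂ : R)) ^ 2
      = (((a₂ : R) * (b₂ : R)) ^ 2) := IsFractionRing.injective R K key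
  have hd : ((a₂ : R) * (b₂ : R)) ≠ 0 :=
    mul_ne_zero (nonZeroDivisors.ne_zero a₂.2) (nonZeroDivisors.ne_zero b₂.2)
  have := congrArg myEquiv hkey
  rw [map_add, map_mul, map_mul, map_pow, map_pow, map_pow, myEquiv_X0, myEquiv_X1] at this
  have hzero := descent (myEquiv ((a₂ : R) * (b₂ : R))).natDegree
    (myEquiv ((a₂ : R) * (b₂ : R))) (myEquiv (b₁ * (a₂ : R))) (myEquiv (a₁ * (b₂ : R))) le_rfl
    (by linear_combination this)
  exact hd (by simpa using myEquiv.injective (hzero.trans (map_zero myEquiv).symm))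
end
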